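/- Let f, g be real univariate polynomials where g has t nonzero terms. If V(f+g) = V(f) + 2t, then every exponent appearing in g with nonzero coefficient is strictly between the smallest and the largest exponents appearing in f with nonzero coefficient. -/

import Mathlib

open Polynomial

/-- Number of sign changes in the coefficient sequence, disregarding zeros. -/
noncomputable def signVar (p : Polynomial ℝ) : ℕ :=
  let l := (((List.range (p.natDegree + 1)).map fun i => p.coeff i).filter fun a => a ≠ 0)
  (l.zip l.tail).countP fun q => q.1 * q.2 < 0

/-- Substitution y = x + 1 into a bivariate polynomial. -/
noncomputable def subXX1 (f : MvPolynomial (Fin 2) ℝ) : Polynomial ℝ :=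
  MvPolynomial.aeval ![Polynomial.X, Polynomial.X + 1] f

/-- `T3 d h = (x+1)^d * h(-x/(x+1))` as a polynomial. -/
noncomputable def T3 (d : ℕ) (h : Polynomial ℝ) : Polynomial ℝ :=
  ∑ i ∈ Finset.range (d + 1),
    Polynomial.C (h.coeff i) * (-Polynomial.X) ^ i * (Polynomial.X + 1) ^ (d - i)

noncomputable def VI1 (h : Polynomial ℝ) : ℕ := signVar h
noncomputable def VI2 (h : Polynomial ℝ) : ℕ := signVar (h.comp (-1 - Polynomial.X))
noncomputable def VI3 (h : Polynomial ℝ) : ℕ := signVar (T3 h.natDegree h)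



noncomputable def chg (l : List ℝ) : ℕ := (l.zip l.tail).countP fun q => q.1 * q.2 < 0

@[simp] lemma chg_nil : chg [] = 0 := rfl
@[simp] lemma chg_single (a : ℝ) : chg [a] = 0 := rfl

lemma chg_cons_cons (a b : ℝ) (l : List ℝ) :
    chg (a :: b :: l) = (if a * b < 0 then 1 else 0) + chg (b :: l) := by
  simp only [chg, List.tail_cons, List.zip_cons_cons, List.countP_cons, decide_eq_true_eq]
  omega

lemma le_chg_cons (a : ℝ) (l : List ℝ) : chg l ≤ chg (a :: l) := by
  cases l with
  | nil => simp
  | cons b l => rw [chg_cons_cons]; omega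

lemma chg_cons_le (a : ℝ) (l : List ℝ) : chg (a :: l) ≤ chg l + 1 := by
  cases l with
  | nil => simp
  | cons b l => rw [chg_cons_cons]; split <;> omega

lemma le_chg_append (l₁ l₂ : List ℝ) : chg l₁ + chg l₂ ≤ chg (l₁ ++ l₂) := by
  induction l₁ with
  | nil => simp
  | cons a l₁ ih =>
    cases l₁ with
    | nil => simpa using le_chg_cons a l₂
    | cons b l₁ =>
      simp only [List.cons_append, chg_cons_cons] at *
      omega

lemma chg_append_le (l₁ l₂ : List ℝ) : chg (l₁ ++ l₂) ≤ chg l₁ + chg l₂ + 1 := by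
  induction l₁ with
  | nil => simp
  | cons a l₁ ih =>
    cases l₁ with
    | nil =>
      simpa using chg_cons_le a l₂
    | cons b l₁ =>
      simp only [List.cons_append, chg_cons_cons] at *
      omega

noncomputable def Vl (l : List ℝ) : ℕ := chg (l.filter fun a => a ≠ 0)

lemma filter_mid (a b : List ℝ) (x : ℝ) :
    ((a ++ x :: b).filter fun z => z ≠ 0)
      = (a.filter fun z => z ≠ 0) ++ (if x ≠ 0 then [x] else []) ++ (b.filter fun z => z ≠ 0) := by
  simp [List.filter_append, List.filter_cons]
  split <;> simp_all

lemma chg_mid_upper (Fa Fb : List ℝ) (fx : List ℝ) (hfx : fx.length ≤ 1) :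
    chg (Fa ++ fx ++ Fb) ≤ chg Fa + chg Fb + 2 := by
  match fx, hfx with
  | [], _ =>
    simp only [List.append_nil]
    have := chg_append_le Fa Fb
    omega
  | [x], _ =>
    have h1 := chg_append_le Fa (x :: Fb)
    have h2 := chg_cons_le x Fb
    calc chg (Fa ++ [x] ++ Fb) = chg (Fa ++ (x :: Fb)) := by simp
      _ ≤ chg Fa + chg (x :: Fb) + 1 := h1
      _ ≤ chg Fa + chg Fb + 2 := by omega

lemma chg_mid_lower (Fa Fb : List ℝ) (fy : List ℝ) :
    chg Fa + chg Fb ≤ chg (Fa ++ fy ++ Fb) := by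
  have h1 := le_chg_append Fa (fy ++ Fb)
  have h2 := le_chg_append fy Fb
  rw [List.append_assoc]
  omega

lemma Vl_mid (a b : List ℝ) (x y : ℝ) :
    Vl (a ++ x :: b) ≤ Vl (a ++ y :: b) + 2 := by
  unfold Vl
  rw [filter_mid, filter_mid]
  have hu := chg_mid_upper (a.filter fun z => z ≠ 0) (b.filter fun z => z ≠ 0)
    (if x ≠ 0 then [x] else []) (by split <;> simp)
  have hl := chg_mid_lower (a.filter fun z => z ≠ 0) (b.filter fun z => z ≠ 0)
    (if y ≠ 0 then [y] else [])
  omega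

lemma Vl_end (a b : List ℝ) (x y : ℝ) (hb : ∀ z ∈ b, z = 0) :
    Vl (a ++ x :: b) ≤ Vl (a ++ y :: b) + 1 := by
  unfold Vl
  rw [filter_mid, filter_mid]
  have hbnil : (b.filter fun z => z ≠ 0) = [] := by
    rw [List.filter_eq_nil_iff]
    intro z hz
    simpa using hb z hz
  rw [hbnil]
  set Fa := a.filter fun z => z ≠ 0
  have h0 : chg (if y ≠ 0 then [y] else []) = 0 := by split <;> simp
  have hl : chg Fa ≤ chg ((Fa ++ if y ≠ 0 then [y] else []) ++ []) := by
    have := le_chg_append Fa (if y ≠ 0 then [y] else [])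
    simp only [List.append_nil]
    omega
  have hu : chg ((Fa ++ if x ≠ 0 then [x] else []) ++ []) ≤ chg Fa + 1 := by
    split
    · have := chg_append_le Fa [x]
      simp only [List.append_nil] at *
      simpa using this
    · simpa using Nat.le_succ (chg Fa)
  omega

lemma Vl_front (a b : List ℝ) (x y : ℝ) (ha : ∀ z ∈ a, z = 0) :
    Vl (a ++ x :: b) ≤ Vl (a ++ y :: b) + 1 := by
  unfold Vl
  rw [filter_mid, filter_mid]
  have hanil : (a.filter fun z => z ≠ 0) = [] := by
    rw [List.filter_eq_nil_iff]
    intro z hz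
    simpa using ha z hz
  rw [hanil]
  set Fb := b.filter fun z => z ≠ 0
  have h0 : chg (if y ≠ 0 then [y] else []) = 0 := by split <;> simp
  have hl : chg Fb ≤ chg (([] ++ if y ≠ 0 then [y] else []) ++ Fb) := by
    have := le_chg_append (if y ≠ 0 then [y] else []) Fb
    simp only [List.nil_append]
    omega
  have hu : chg (([] ++ if x ≠ 0 then [x] else []) ++ Fb) ≤ chg Fb + 1 := by
    split
    · simpa using chg_cons_le x Fb
    · simp
  omega

noncomputable def clist (N : ℕ) (p : Polynomial ℝ) : List ℝ := (List.range N).map p.coeff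

lemma signVar_def (p : Polynomial ℝ) : signVar p = Vl (clist (p.natDegree + 1) p) := rfl

lemma Vl_clist (p : Polynomial ℝ) (N : ℕ) (hN : p.natDegree < N) :
    signVar p = Vl (clist N p) := by
  obtain ⟨m, rfl⟩ := Nat.exists_eq_add_of_le hN
  rw [signVar_def]
  unfold Vl clist
  congr 1
  rw [show List.range (p.natDegree + 1 + m)
        = List.range (p.natDegree + 1) ++ (List.range m).map (fun x => p.natDegree + 1 + x)
      from List.range_add,
    List.map_append, List.filter_append, List.map_map]
  have : (((List.range m).map (p.coeff ∘ fun x => p.natDegree + 1 + x))).filter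
      (fun a => a ≠ 0) = [] := by
    rw [List.filter_eq_nil_iff]
    intro z hz
    simp only [List.mem_map, List.mem_range, Function.comp] at hz
    obtain ⟨i, _, rfl⟩ := hz
    simp only [decide_eq_true_eq, not_not]
    apply p.coeff_eq_zero_of_natDegree_lt
    omega
  rw [this, List.append_nil]

lemma clist_split (p : Polynomial ℝ) (K m : ℕ) :
    clist (K + 1 + m) p =
      clist K p ++ p.coeff K :: ((List.range m).map fun i => p.coeff (K + 1 + i)) := by
  unfold clist
  rw [List.range_add, List.map_append, List.range_succ, List.map_append]
  simp [List.map_map, Function.comp]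

lemma coeff_add_term (p : Polynomial ℝ) (c : ℝ) (K i : ℕ) (hi : i ≠ K) :
    (p + C c * X ^ K).coeff i = p.coeff i := by
  simp [coeff_add, coeff_C_mul, coeff_X_pow, hi]

lemma clist_eq_outside (p : Polynomial ℝ) (c : ℝ) (K : ℕ) :
    clist K (p + C c * X ^ K) = clist K p := by
  unfold clist
  apply List.map_congr_left
  intro i hi
  exact coeff_add_term p c K i (by simp at hi; omega)

lemma tail_eq_outside (p : Polynomial ℝ) (c : ℝ) (K m : ℕ) :
    ((List.range m).map fun i => (p + C c * X ^ K).coeff (K + 1 + i))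
      = (List.range m).map fun i => p.coeff (K + 1 + i) := by
  apply List.map_congr_left
  intro i _
  exact coeff_add_term p c K _ (by omega)

lemma step_two (p : Polynomial ℝ) (c : ℝ) (K : ℕ) :
    signVar (p + C c * X ^ K) ≤ signVar p + 2 := by
  set q := p + C c * X ^ K with hq
  set N := max (max p.natDegree q.natDegree) K + 1 with hN
  obtain ⟨m, hm⟩ : ∃ m, N = K + 1 + m := ⟨N - (K + 1), by omega⟩
  rw [Vl_clist p N (by omega), Vl_clist q N (by omega), hm,
    clist_split, clist_split, clist_eq_outside, tail_eq_outside]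
  exact Vl_mid _ _ _ _

lemma step_one_top (p : Polynomial ℝ) (c : ℝ) (K : ℕ) (hK : p.natDegree ≤ K) :
    signVar (p + C c * X ^ K) ≤ signVar p + 1 := by
  set q := p + C c * X ^ K with hq
  set N := max (max p.natDegree q.natDegree) K + 1 with hN
  obtain ⟨m, hm⟩ : ∃ m, N = K + 1 + m := ⟨N - (K + 1), by omega⟩
  rw [Vl_clist p N (by omega), Vl_clist q N (by omega), hm,
    clist_split, clist_split, clist_eq_outside, tail_eq_outside]
  apply Vl_end
  intro z hz
  simp only [List.mem_map, List.mem_range] at hz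
  obtain ⟨i, _, rfl⟩ := hz
  exact p.coeff_eq_zero_of_natDegree_lt (by omega)

lemma step_one_bot (p : Polynomial ℝ) (c : ℝ) (K : ℕ) (hK : ∀ i < K, p.coeff i = 0) :
    signVar (p + C c * X ^ K) ≤ signVar p + 1 := by
  set q := p + C c * X ^ K with hq
  set N := max (max p.natDegree q.natDegree) K + 1 with hN
  obtain ⟨m, hm⟩ : ∃ m, N = K + 1 + m := ⟨N - (K + 1), by omega⟩
  rw [Vl_clist p N (by omega), Vl_clist q N (by omega), hm,
    clist_split, clist_split, clist_eq_outside, tail_eq_outside]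
  apply Vl_front
  intro z hz
  simp only [clist, List.mem_map, List.mem_range] at hz
  obtain ⟨i, hi, rfl⟩ := hz
  exact hK i hi

lemma decompose (f g : Polynomial ℝ) (K : ℕ) :
    f + g = (f + g.erase K) + C (g.coeff K) * X ^ K := by
  rw [C_mul_X_pow_eq_monomial]
  conv_lhs => rw [← g.monomial_add_erase K]
  ring

lemma erase_card (g : Polynomial ℝ) (K : ℕ) (hK : K ∈ g.support) :
    (g.erase K).support.card = g.support.card - 1 := by
  rw [support_erase, Finset.card_erase_of_mem hK]

lemma general_bound : ∀ n : ℕ, ∀ f g : Polynomial ℝ, g.support.card = n →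
    signVar (f + g) ≤ signVar f + 2 * n := by
  intro n
  induction n with
  | zero =>
    intro f g hg
    rw [Finset.card_eq_zero, Polynomial.support_eq_empty] at hg
    simp [hg]
  | succ n ih =>
    intro f g hg
    have hne : g.support.Nonempty := by
      rw [← Finset.card_pos, hg]; omega
    obtain ⟨K, hK⟩ := hne
    have h1 : signVar (f + g) ≤ signVar (f + g.erase K) + 2 := by
      rw [decompose f g K]; exact step_two _ _ _
    have h2 := ih f (g.erase K) (by rw [erase_card g K hK, hg]; omega)
    omega

theorem stmt2 (f g : Polynomial ℝ) (t : ℕ) (hf : f ≠ 0) (hg : g.support.card = t)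
    (h : signVar (f + g) = signVar f + 2 * t) :
    ∀ k ∈ g.support, f.natTrailingDegree < k ∧ k < f.natDegree := by
  intro k hk
  have hne : g.support.Nonempty := ⟨k, hk⟩
  have ht : 1 ≤ t := by rw [← hg]; exact Finset.card_pos.mpr hne
  constructor
  · by_contra hc
    push_neg at hc
    set K := g.support.min' hne with hKdef
    have hKk : K ≤ k := Finset.min'_le _ _ hk
    have hKmem : K ∈ g.support := Finset.min'_mem _ _
    have hzero : ∀ i < K, (f + g.erase K).coeff i = 0 := by
      intro i hi
      have hfi : f.coeff i = 0 :=
        f.coeff_eq_zero_of_lt_natTrailingDegree (by omega)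
      have hgi : (g.erase K).coeff i = 0 := by
        rw [Polynomial.coeff_erase]
        have : i ∉ g.support := fun hmem => absurd (Finset.min'_le _ _ hmem) (by omega)
        simp only [Polynomial.mem_support_iff, not_not] at this
        simp [this]
      simp [hfi, hgi]
    have h1 : signVar (f + g) ≤ signVar (f + g.erase K) + 1 := by
      rw [decompose f g K]; exact step_one_bot _ _ _ hzero
    have h2 := general_bound (t - 1) f (g.erase K) (by rw [erase_card g K hKmem, hg])
    omega
  · by_contra hc
    push_neg at hc
    set K := g.support.max' hne with hKdef
    have hKk : k ≤ K := Finset.le_max' _ _ hk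
    have hKmem : K ∈ g.support := Finset.max'_mem _ _
    have hdeg : (f + g.erase K).natDegree ≤ K := by
      apply le_trans (natDegree_add_le _ _)
      rw [max_le_iff]
      constructor
      · omega
      · rw [Polynomial.natDegree_le_iff_coeff_eq_zero]
        intro m hm
        rw [Polynomial.coeff_erase]
        have : m ∉ g.support := fun hmem => absurd (Finset.le_max' _ _ hmem) (by omega)
        simp only [Polynomial.mem_support_iff, not_not] at this
        simp [this]
    have h1 : signVar (f + g) ≤ signVar (f + g.erase K) + 1 := by
      rw [decompose f g K]; exact step_one_top _ _ _ hdeg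
    have h2 := general_bound (t - 1) f (g.erase K) (by rw [erase_card g K hKmem, hg])
    omega
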